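/- For every linear subvariety Π ⊆ ℝ^k × ℝ^k of codimension 2, the number of distinct linear forms obtained by restricting the forms in Ψ to Π is at least 2^{k−1}. -/

import Mathlib

/-- ψ_{v,I}(x,y) = Σ_{i∈I}(v−i)x_i + Σ_{i∉I}(v−i)y_i. -/
def psiVI (k : ℕ) (v : Fin k) (I : Finset (Fin k)) (x y : Fin k → ℝ) : ℝ :=
  ∑ i : Fin k, (if i ∈ I then ((v : ℝ) - (i : ℝ)) * x i else ((v : ℝ) - (i : ℝ)) * y i)

namespace Stmt6Aux

open Finset Module

variable (k : ℕ)

/-- the coordinate form z ↦ z.1 i -/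
noncomputable def coord1 (i : Fin k) : Module.Dual ℝ ((Fin k → ℝ) × (Fin k → ℝ)) :=
  (LinearMap.proj i).comp (LinearMap.fst ℝ (Fin k → ℝ) (Fin k → ℝ))

/-- the coordinate form z ↦ z.2 i -/
noncomputable def coord2 (i : Fin k) : Module.Dual ℝ ((Fin k → ℝ) × (Fin k → ℝ)) :=
  (LinearMap.proj i).comp (LinearMap.snd ℝ (Fin k → ℝ) (Fin k → ℝ))

@[simp] lemma coord1_apply (i : Fin k) (z) : coord1 k i z = z.1 i := rfl
@[simp] lemma coord2_apply (i : Fin k) (z) : coord2 k i z = z.2 i := rfl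

/-- ψ_{v,I} as a linear form. -/
noncomputable def psiL (v : Fin k) (I : Finset (Fin k)) :
    Module.Dual ℝ ((Fin k → ℝ) × (Fin k → ℝ)) :=
  ∑ i : Fin k, ((v : ℝ) - (i : ℝ)) • (if i ∈ I then coord1 k i else coord2 k i)

lemma psiL_apply (v : Fin k) (I : Finset (Fin k)) (z) :
    psiL k v I z = psiVI k v I z.1 z.2 := by
  simp only [psiL, psiVI, LinearMap.coe_sum, Finset.sum_apply, LinearMap.smul_apply,
    smul_eq_mul]
  refine Finset.sum_congr rfl fun i _ => ?_
  by_cases h : i ∈ I <;> simp [h]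

/-- The map sending `a` to the linear form `z ↦ ∑ aᵢ (xᵢ − yᵢ)`. -/
noncomputable def phi : (Fin k → ℝ) →ₗ[ℝ] Module.Dual ℝ ((Fin k → ℝ) × (Fin k → ℝ)) where
  toFun a := ∑ i : Fin k, a i • (coord1 k i - coord2 k i)
  map_add' a b := by
    show (∑ i : Fin k, (a + b) i • (coord1 k i - coord2 k i))
      = (∑ i : Fin k, a i • (coord1 k i - coord2 k i))
        + ∑ i : Fin k, b i • (coord1 k i - coord2 k i)
    rw [← Finset.sum_add_distrib]
    refine Finset.sum_congr rfl fun i _ => ?_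
    rw [Pi.add_apply, add_smul]
  map_smul' c a := by
    show (∑ i : Fin k, (c • a) i • (coord1 k i - coord2 k i))
      = c • ∑ i : Fin k, a i • (coord1 k i - coord2 k i)
    rw [Finset.smul_sum]
    refine Finset.sum_congr rfl fun i _ => ?_
    rw [Pi.smul_apply, smul_eq_mul, ← smul_smul]

lemma phi_apply (a : Fin k → ℝ) (z) :
    phi k a z = ∑ i, a i * (z.1 i - z.2 i) := by
  simp only [phi, LinearMap.coe_mk, AddHom.coe_mk, LinearMap.coe_sum, Finset.sum_apply,
    LinearMap.smul_apply, LinearMap.sub_apply, coord1_apply, coord2_apply, smul_eq_mul]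

lemma phi_inj : Function.Injective (phi k) := by
  intro a b h
  funext i
  have h1 := DFunLike.congr_fun h ((Pi.single i (1:ℝ)), (0 : Fin k → ℝ))
  rw [phi_apply, phi_apply] at h1
  have key : ∀ c : Fin k → ℝ,
      (∑ j, c j * (((Pi.single i (1:ℝ) : Fin k → ℝ), (0 : Fin k → ℝ)).1 j
        - ((Pi.single i (1:ℝ) : Fin k → ℝ), (0 : Fin k → ℝ)).2 j)) = c i := by
    intro c
    have h2 : ∀ j : Fin k,
        c j * ((Pi.single i (1:ℝ) : Fin k → ℝ) j - (0 : Fin k → ℝ) j)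
        = if j = i then c j else 0 := by
      intro j
      by_cases hj : j = i <;> simp [Pi.single_apply, hj]
    rw [Finset.sum_congr rfl fun j _ => h2 j, Finset.sum_ite_eq' Finset.univ i c,
      if_pos (Finset.mem_univ i)]
  rw [key a, key b] at h1
  exact h1

/-- coefficient vector of ψ_{v,I} − ψ_{v,J}. -/
def aIJ (v : Fin k) (I J : Finset (Fin k)) : Fin k → ℝ :=
  fun i => ((v : ℝ) - (i : ℝ)) * ((if i ∈ I then (1:ℝ) else 0) - (if i ∈ J then (1:ℝ) else 0))

lemma psiL_sub_same (v : Fin k) (I J : Finset (Fin k)) :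
    psiL k v I - psiL k v J = phi k (aIJ k v I J) := by
  refine LinearMap.ext fun z => ?_
  rw [LinearMap.sub_apply, psiL_apply, psiL_apply, phi_apply]
  simp only [psiVI, aIJ]
  rw [← Finset.sum_sub_distrib]
  refine Finset.sum_congr rfl fun i _ => ?_
  by_cases h1 : i ∈ I <;> by_cases h2 : i ∈ J <;> simp [h1, h2] <;> ring

lemma cast_ne_of_ne {v i : Fin k} (h : v ≠ i) : ((v : ℝ) - (i : ℝ)) ≠ 0 := by
  refine sub_ne_zero.mpr ?_
  intro hh
  exact h (Fin.ext (by exact_mod_cast hh))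

lemma eq_of_aIJ_zero {v : Fin k} {I J : Finset (Fin k)} (hvI : v ∈ I) (hvJ : v ∈ J)
    (h : aIJ k v I J = 0) : I = J := by
  ext i
  by_cases hiv : i = v
  · subst hiv; simp [hvI, hvJ]
  · have hi := congrFun h i
    simp only [aIJ, Pi.zero_apply] at hi
    rcases mul_eq_zero.mp hi with h' | h'
    · exact absurd h' (cast_ne_of_ne k (fun hh => hiv hh.symm))
    · have h'' := sub_eq_zero.mp h'
      by_cases h1 : i ∈ I <;> by_cases h2 : i ∈ J <;> simp [h1, h2] at h'' ⊢

variable (P : Submodule ℝ ((Fin k → ℝ) × (Fin k → ℝ)))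

/-- The restriction function appearing in the statement. -/
def Fn : Fin k × Finset (Fin k) → (P → ℝ) :=
  fun p => fun z : P => psiVI k p.1 p.2 z.val.1 z.val.2

lemma restrict_eq_iff (v w : Fin k) (I J : Finset (Fin k)) :
    Fn k P (v, I) = Fn k P (w, J) ↔ psiL k v I - psiL k w J ∈ P.dualAnnihilator := by
  rw [Submodule.mem_dualAnnihilator]
  constructor
  · intro h z hz
    have h1 := congrFun h ⟨z, hz⟩
    simp only [Fn] at h1
    rw [LinearMap.sub_apply, psiL_apply, psiL_apply, sub_eq_zero]
    exact h1
  · intro h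
    funext z
    have h1 := h z.val z.property
    rw [LinearMap.sub_apply, psiL_apply, psiL_apply, sub_eq_zero] at h1
    exact h1

/-- family of pairs (v, insert v I), I ⊆ S. -/
def Tfam (v : Fin k) (S : Finset (Fin k)) : Finset (Fin k × Finset (Fin k)) :=
  S.powerset.image fun I => (v, insert v I)

lemma mem_Tfam {v : Fin k} {S : Finset (Fin k)} {p : Fin k × Finset (Fin k)} :
    p ∈ Tfam k v S ↔ ∃ I ⊆ S, p = (v, insert v I) := by
  simp only [Tfam, Finset.mem_image, Finset.mem_powerset]
  constructor
  · rintro ⟨I, hI, rfl⟩; exact ⟨I, hI, rfl⟩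
  · rintro ⟨I, hI, rfl⟩; exact ⟨I, hI, rfl⟩

lemma Tfam_card (v : Fin k) (S : Finset (Fin k)) (hv : v ∉ S) :
    (Tfam k v S).card = 2 ^ S.card := by
  rw [Tfam, Finset.card_image_of_injOn, Finset.card_powerset]
  intro I hI J hJ h
  simp only [Finset.mem_coe, Finset.mem_powerset] at hI hJ
  have h2 : insert v I = insert v J := congrArg Prod.snd h
  have hIv : v ∉ I := fun hc => hv (hI hc)
  have hJv : v ∉ J := fun hc => hv (hJ hc)
  rw [← Finset.erase_insert hIv, ← Finset.erase_insert hJv, h2]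

/-- the subspace of coefficient vectors `a` whose form `phi a` kills `P`. -/
noncomputable def Asub : Submodule ℝ (Fin k → ℝ) :=
  Submodule.comap (phi k) P.dualAnnihilator

/-- phi restricted as a map into the dual annihilator. -/
noncomputable def restrMap : (Asub k P) →ₗ[ℝ] P.dualAnnihilator :=
  LinearMap.codRestrict _ ((phi k).domRestrict _) (fun a => Submodule.mem_comap.mp a.property)

lemma restrMap_val (x : Asub k P) :
    ((restrMap k P x : P.dualAnnihilator) : Module.Dual ℝ ((Fin k → ℝ) × (Fin k → ℝ)))
      = phi k x.val := rfl

lemma restrMap_inj : Function.Injective (restrMap k P) := by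
  intro x y hxy
  have e1 := congrArg Subtype.val hxy
  rw [restrMap_val, restrMap_val] at e1
  exact Subtype.ext (phi_inj k e1)

lemma finrank_ann (hk : 2 ≤ k) (hP : finrank ℝ P = 2 * k - 2) :
    finrank ℝ P.dualAnnihilator = 2 := by
  have hV : finrank ℝ ((Fin k → ℝ) × (Fin k → ℝ)) = 2 * k := by
    rw [Module.finrank_prod, Module.finrank_pi, Fintype.card_fin]
    omega
  have h1 : finrank ℝ (((Fin k → ℝ) × (Fin k → ℝ)) ⧸ P) = finrank ℝ P.dualAnnihilator :=
    LinearEquiv.finrank_eq (Subspace.quotEquivAnnihilator P)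
  have h2 := Submodule.finrank_quotient_add_finrank P
  rw [hV, hP] at h2
  omega

lemma finrank_Asub_le (hk : 2 ≤ k) (hP : finrank ℝ P = 2 * k - 2) :
    finrank ℝ (Asub k P) ≤ 2 := by
  have h1 := LinearMap.finrank_le_finrank_of_injective (restrMap_inj k P)
  rw [finrank_ann k P hk hP] at h1
  exact h1

lemma within_mem {v : Fin k} {I J : Finset (Fin k)}
    (heq : Fn k P (v, I) = Fn k P (v, J)) : aIJ k v I J ∈ Asub k P := by
  have hm := (restrict_eq_iff k P v v I J).mp heq
  rw [psiL_sub_same] at hm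
  exact Submodule.mem_comap.mpr hm

/-- cross-v separation, assuming the annihilator is contained in the `phi`-image. -/
lemma cross_sep (hk : 2 ≤ k)
    (hsurj : ∀ f ∈ P.dualAnnihilator, ∃ a ∈ Asub k P, phi k a = f)
    (v w : Fin k) (I J : Finset (Fin k)) (heq : Fn k P (v, I) = Fn k P (w, J)) : v = w := by
  have hm := (restrict_eq_iff k P v w I J).mp heq
  obtain ⟨a, _, ha⟩ := hsurj _ hm
  set z₁ : (Fin k → ℝ) × (Fin k → ℝ) := (fun _ => (1:ℝ), fun _ => (1:ℝ)) with hz₁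
  have h1 := DFunLike.congr_fun ha z₁
  rw [phi_apply, LinearMap.sub_apply, psiL_apply, psiL_apply] at h1
  have hL : (∑ i : Fin k, a i * (z₁.1 i - z₁.2 i)) = 0 := by
    simp [hz₁]
  rw [hL] at h1
  have h2 : psiVI k v I z₁.1 z₁.2 - psiVI k w J z₁.1 z₁.2
      = (k : ℝ) * ((v : ℝ) - (w : ℝ)) := by
    simp only [psiVI]
    rw [← Finset.sum_sub_distrib]
    have h3 : ∀ i : Fin k, (if i ∈ I then ((v:ℝ) - (i:ℝ)) * z₁.1 i else ((v:ℝ) - (i:ℝ)) * z₁.2 i)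
        - (if i ∈ J then ((w:ℝ) - (i:ℝ)) * z₁.1 i else ((w:ℝ) - (i:ℝ)) * z₁.2 i)
        = (v : ℝ) - (w : ℝ) := by
      intro i
      have e1 : z₁.1 i = 1 := rfl
      have e2 : z₁.2 i = 1 := rfl
      rw [e1, e2]
      by_cases hi1 : i ∈ I <;> by_cases hi2 : i ∈ J <;> simp [hi1, hi2]
    rw [Finset.sum_congr rfl fun i _ => h3 i, Finset.sum_const, Finset.card_univ,
      Fintype.card_fin, nsmul_eq_mul]
  rw [h2] at h1
  have hk0 : (k : ℝ) ≠ 0 := Nat.cast_ne_zero.mpr (by omega)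
  have h4 := (mul_eq_zero.mp h1.symm).resolve_left hk0
  have hvw : (v : ℝ) = (w : ℝ) := sub_eq_zero.mp h4
  exact Fin.ext (by exact_mod_cast hvw)

/-- a good coordinate pair exists at every coordinate where `Asub` is not degenerate. -/
lemma good_coord (hk : 2 ≤ k) (hA2 : finrank ℝ (Asub k P) = 2) (v : Fin k)
    (hvG : ∃ c ∈ Asub k P, c v ≠ 0) :
    ∃ j, j ≠ v ∧ ∀ a ∈ Asub k P, a v = 0 → a j = 0 → a = 0 := by
  obtain ⟨c, hcA, hcv⟩ := hvG
  set Hv : Submodule ℝ (Fin k → ℝ) := LinearMap.ker (LinearMap.proj (R := ℝ)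
    (φ := fun _ : Fin k => ℝ) v) with hHv
  have hmemHv : ∀ a : Fin k → ℝ, a ∈ Hv ↔ a v = 0 := by
    intro a
    rw [hHv, LinearMap.mem_ker, LinearMap.proj_apply]
  have hlt : Asub k P ⊓ Hv < Asub k P := by
    refine lt_of_le_of_ne inf_le_left ?_
    intro hc
    have hcmem : c ∈ Asub k P ⊓ Hv := by rw [hc]; exact hcA
    exact hcv ((hmemHv c).mp hcmem.2)
  have hfr : finrank ℝ (Asub k P ⊓ Hv : Submodule ℝ (Fin k → ℝ)) < 2 := by
    have h6 := Submodule.finrank_lt_finrank_of_lt hlt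
    omega
  by_cases hbot : (Asub k P ⊓ Hv : Submodule ℝ (Fin k → ℝ)) = ⊥
  · obtain ⟨j, hj⟩ := Fintype.exists_ne_of_one_lt_card
      (by rw [Fintype.card_fin]; omega) v
    refine ⟨j, hj, fun a haA hav _ => ?_⟩
    have hm : a ∈ Asub k P ⊓ Hv := ⟨haA, (hmemHv a).mpr hav⟩
    rw [hbot] at hm
    exact hm
  · obtain ⟨β, hβmem, hβ0⟩ := Submodule.exists_mem_ne_zero_of_ne_bot hbot
    obtain ⟨j, hjβ⟩ : ∃ j, β j ≠ 0 := by
      by_contra hcon; push_neg at hcon; exact hβ0 (funext hcon)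
    have hβv : β v = 0 := (hmemHv β).mp hβmem.2
    have hjv : j ≠ v := fun hc => hjβ (hc ▸ hβv)
    have hspan : Submodule.span ℝ {β} = Asub k P ⊓ Hv := by
      apply Submodule.eq_of_le_of_finrank_le
      · rw [Submodule.span_le, Set.singleton_subset_iff]; exact hβmem
      · rw [finrank_span_singleton hβ0]; omega
    refine ⟨j, hjv, fun a haA hav haj => ?_⟩
    have hamem : a ∈ Submodule.span ℝ {β} := by
      rw [hspan]; exact ⟨haA, (hmemHv a).mpr hav⟩
    obtain ⟨t, ht⟩ := Submodule.mem_span_singleton.mp hamem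
    have htj : a j = t * β j := by rw [← ht]; rfl
    rw [haj] at htj
    rcases mul_eq_zero.mp htj.symm with h | h
    · rw [← ht, h, zero_smul]
    · exact absurd h hjβ

/-- if `Asub` is 2-dimensional there are two nondegenerate coordinates. -/
lemma two_coords (hk : 2 ≤ k) (hA2 : finrank ℝ (Asub k P) = 2) :
    ∃ v₁ v₂ : Fin k, v₁ ≠ v₂ ∧ (∃ c ∈ Asub k P, c v₁ ≠ 0) ∧ (∃ c ∈ Asub k P, c v₂ ≠ 0) := by
  classical
  haveI : Nonempty (Fin k) := ⟨⟨0, by omega⟩⟩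
  set G : Finset (Fin k) := Finset.univ.filter (fun v => ∃ a ∈ Asub k P, a v ≠ 0) with hG
  have hGcard : 1 < G.card := by
    by_contra hcon
    push_neg at hcon
    obtain ⟨u, hu⟩ := Finset.card_le_one_iff_subset_singleton.mp hcon
    set e : Fin k → ℝ := Pi.single u (1:ℝ) with he
    have hle : Asub k P ≤ Submodule.span ℝ {e} := by
      intro a ha
      rw [Submodule.mem_span_singleton]
      refine ⟨a u, funext fun w => ?_⟩
      by_cases hw : w = u
      · subst hw; simp [he]
      · have hwG : w ∉ G := by
          intro hc
          exact hw (Finset.mem_singleton.mp (hu hc))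
        have hnw : ¬ ∃ b ∈ Asub k P, b w ≠ 0 := by
          intro hc
          exact hwG (Finset.mem_filter.mpr ⟨Finset.mem_univ w, hc⟩)
        push_neg at hnw
        have haw : a w = 0 := hnw a ha
        simp [he, Pi.single_apply, hw, haw]
    have hone : finrank ℝ (Asub k P) ≤ 1 := by
      have h1 : e ≠ 0 := by
        intro hc
        have h2 := congrFun hc u
        simp [he] at h2
      have h5 := Submodule.finrank_mono hle
      rw [finrank_span_singleton h1] at h5
      exact h5
    omega
  obtain ⟨v₁, hv₁G, v₂, hv₂G, hv12⟩ := Finset.one_lt_card.mp hGcard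
  exact ⟨v₁, v₂, hv12, (Finset.mem_filter.mp hv₁G).2, (Finset.mem_filter.mp hv₂G).2⟩

/-- finrank of Asub is 2 in the degenerate case. -/
lemma finrank_Asub_eq_two (hk : 2 ≤ k) (hP : finrank ℝ P = 2 * k - 2)
    (hcase : ∀ v : Fin k, ∃ a ∈ Asub k P, a v = 0 ∧ a ≠ 0) :
    finrank ℝ (Asub k P) = 2 := by
  refine le_antisymm (finrank_Asub_le k P hk hP) ?_
  obtain ⟨a, haA, hav, ha0⟩ := hcase ⟨0, by omega⟩
  obtain ⟨u, hu⟩ : ∃ u, a u ≠ 0 := by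
    by_contra hcon
    push_neg at hcon
    exact ha0 (funext hcon)
  obtain ⟨b, hbA, hbu, hb0⟩ := hcase u
  have hli : LinearIndependent ℝ ![(⟨b, hbA⟩ : Asub k P), ⟨a, haA⟩] := by
    rw [LinearIndependent.pair_iff]
    intro s t hst
    have hval : s • b + t • a = 0 := by
      have h7 := congrArg (Subtype.val) hst
      simpa using h7
    have hvalu : s * b u + t * a u = 0 := by
      have h8 := congrFun hval u
      simpa using h8
    rw [hbu, mul_zero, zero_add] at hvalu
    have ht : t = 0 := by
      rcases mul_eq_zero.mp hvalu with h | h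
      · exact h
      · exact absurd h hu
    subst ht
    rw [zero_smul, add_zero] at hval
    have hs : s = 0 := by
      rcases smul_eq_zero.mp hval with h | h
      · exact h
      · exact absurd h hb0
    exact ⟨hs, rfl⟩
  have hcard := hli.fintype_card_le_finrank
  simpa using hcard

lemma surj_of_two (hk : 2 ≤ k) (hP : finrank ℝ P = 2 * k - 2)
    (hA2 : finrank ℝ (Asub k P) = 2) :
    ∀ f ∈ P.dualAnnihilator, ∃ a ∈ Asub k P, phi k a = f := by
  have hrsurj : Function.Surjective (restrMap k P) :=
    (LinearMap.injective_iff_surjective_of_finrank_eq_finrank (K := ℝ) (V := Asub k P)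
      (V₂ := P.dualAnnihilator) (f := restrMap k P)
      (by rw [hA2, finrank_ann k P hk hP])).mp (restrMap_inj k P)
  intro f hf
  obtain ⟨a, ha⟩ := hrsurj ⟨f, hf⟩
  have e1 := congrArg Subtype.val ha
  rw [restrMap_val] at e1
  exact ⟨a.val, a.property, e1⟩

end Stmt6Aux

open Finset Module Stmt6Aux in
open Classical in
/-- For every codimension-2 subspace Π of ℝ^k × ℝ^k, the number of distinct
restrictions to Π of the forms in Ψ = {ψ_{v,I} : v ∈ I ⊆ [k]} is at least 2^{k−1}. -/
theorem stmt6 (k : ℕ) (hk : 2 ≤ k) (P : Submodule ℝ ((Fin k → ℝ) × (Fin k → ℝ)))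
    (hP : Module.finrank ℝ P = 2 * k - 2) :
    2 ^ (k - 1) ≤
      ((Finset.univ.filter fun p : Fin k × Finset (Fin k) => p.1 ∈ p.2).image
        fun p => (fun z : P => psiVI k p.1 p.2 z.val.1 z.val.2)).card := by
  classical
  have hgoal : ((Finset.univ.filter fun p : Fin k × Finset (Fin k) => p.1 ∈ p.2).image
      fun p => (fun z : P => psiVI k p.1 p.2 z.val.1 z.val.2))
      = ((Finset.univ.filter fun p : Fin k × Finset (Fin k) => p.1 ∈ p.2).image (Fn k P)) := rfl
  rw [hgoal]
  -- general counting principle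
  have count : ∀ T : Finset (Fin k × Finset (Fin k)), (∀ p ∈ T, p.1 ∈ p.2) →
      Set.InjOn (Fn k P) T →
      T.card ≤ ((Finset.univ.filter fun p : Fin k × Finset (Fin k) => p.1 ∈ p.2).image
        (Fn k P)).card := by
    intro T hT hinj
    have hsub : T ⊆ Finset.univ.filter fun p : Fin k × Finset (Fin k) => p.1 ∈ p.2 := by
      intro p hp
      simp only [Finset.mem_filter, Finset.mem_univ, true_and]
      exact hT p hp
    calc T.card = (T.image (Fn k P)).card := (Finset.card_image_of_injOn hinj).symm
      _ ≤ _ := Finset.card_le_card (Finset.image_subset_image hsub)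
  by_cases hcase : ∃ v : Fin k, ∀ a ∈ Asub k P, a v = 0 → a = 0
  -- Case 1
  · obtain ⟨v, hv⟩ := hcase
    have hvS : v ∉ Finset.univ.erase v := Finset.notMem_erase v _
    have hcard : (Tfam k v (Finset.univ.erase v)).card = 2 ^ (k - 1) := by
      rw [Tfam_card k v _ hvS, Finset.card_erase_of_mem (Finset.mem_univ v),
        Finset.card_univ, Fintype.card_fin]
    rw [← hcard]
    apply count
    · intro p hp
      obtain ⟨I, hI, rfl⟩ := (mem_Tfam k).mp hp
      exact Finset.mem_insert_self v I
    · intro p hp q hq heq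
      obtain ⟨I, hI, rfl⟩ := (mem_Tfam k).mp hp
      obtain ⟨J, hJ, rfl⟩ := (mem_Tfam k).mp hq
      have hmem := within_mem k P heq
      have hzero : aIJ k v (insert v I) (insert v J) = 0 := by
        apply hv _ hmem
        simp [aIJ]
      have hIJ := eq_of_aIJ_zero k (Finset.mem_insert_self v I)
        (Finset.mem_insert_self v J) hzero
      rw [hIJ]
  -- Case 2
  · push_neg at hcase
    have hA2 : finrank ℝ (Asub k P) = 2 := finrank_Asub_eq_two k P hk hP hcase
    have hsurj := surj_of_two k P hk hP hA2
    obtain ⟨v₁, v₂, hv12, hg1, hg2⟩ := two_coords k P hk hA2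
    obtain ⟨j₁, hj₁v, hgood₁⟩ := good_coord k P hk hA2 v₁ hg1
    obtain ⟨j₂, hj₂v, hgood₂⟩ := good_coord k P hk hA2 v₂ hg2
    have hS₁card : ((Finset.univ.erase v₁).erase j₁).card = k - 2 := by
      rw [Finset.card_erase_of_mem (Finset.mem_erase.mpr ⟨hj₁v, Finset.mem_univ j₁⟩),
        Finset.card_erase_of_mem (Finset.mem_univ v₁), Finset.card_univ, Fintype.card_fin]
      omega
    have hS₂card : ((Finset.univ.erase v₂).erase j₂).card = k - 2 := by
      rw [Finset.card_erase_of_mem (Finset.mem_erase.mpr ⟨hj₂v, Finset.mem_univ j₂⟩),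
        Finset.card_erase_of_mem (Finset.mem_univ v₂), Finset.card_univ, Fintype.card_fin]
      omega
    have hvS₁ : v₁ ∉ (Finset.univ.erase v₁).erase j₁ :=
      fun hc => (Finset.notMem_erase v₁ _) (Finset.mem_of_mem_erase hc)
    have hvS₂ : v₂ ∉ (Finset.univ.erase v₂).erase j₂ :=
      fun hc => (Finset.notMem_erase v₂ _) (Finset.mem_of_mem_erase hc)
    have hdisj : Disjoint (Tfam k v₁ ((Finset.univ.erase v₁).erase j₁))
        (Tfam k v₂ ((Finset.univ.erase v₂).erase j₂)) := by
      rw [Finset.disjoint_left]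
      intro p hp hq
      obtain ⟨I, _, rfl⟩ := (mem_Tfam k).mp hp
      obtain ⟨J, _, hJ⟩ := (mem_Tfam k).mp hq
      exact hv12 (congrArg Prod.fst hJ)
    have hcard : (Tfam k v₁ ((Finset.univ.erase v₁).erase j₁)
        ∪ Tfam k v₂ ((Finset.univ.erase v₂).erase j₂)).card = 2 ^ (k - 1) := by
      rw [Finset.card_union_of_disjoint hdisj, Tfam_card k v₁ _ hvS₁, Tfam_card k v₂ _ hvS₂,
        hS₁card, hS₂card]
      have h1 : k - 1 = (k - 2) + 1 := by omega
      rw [h1, pow_succ]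
      ring
    rw [← hcard]
    apply count
    · intro p hp
      rcases Finset.mem_union.mp hp with h | h
      · obtain ⟨I, _, rfl⟩ := (mem_Tfam k).mp h
        exact Finset.mem_insert_self _ _
      · obtain ⟨I, _, rfl⟩ := (mem_Tfam k).mp h
        exact Finset.mem_insert_self _ _
    · intro p hp q hq heq
      have main : ∀ (v j : Fin k), j ≠ v →
          (∀ a ∈ Asub k P, a v = 0 → a j = 0 → a = 0) →
          ∀ p q : Fin k × Finset (Fin k),
            p ∈ Tfam k v ((Finset.univ.erase v).erase j) →
            q ∈ Tfam k v ((Finset.univ.erase v).erase j) →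
            Fn k P p = Fn k P q → p = q := by
        intro v j hjv hgood p q hp hq heq
        obtain ⟨I, hIS, rfl⟩ := (mem_Tfam k).mp hp
        obtain ⟨J, hJS, rfl⟩ := (mem_Tfam k).mp hq
        have hmem := within_mem k P heq
        have hjI : j ∉ insert v I := by
          intro hc
          rcases Finset.mem_insert.mp hc with h | h
          · exact hjv h
          · exact Finset.notMem_erase j _ (hIS h)
        have hjJ : j ∉ insert v J := by
          intro hc
          rcases Finset.mem_insert.mp hc with h | h
          · exact hjv h
          · exact Finset.notMem_erase j _ (hJS h)
        have hzero : aIJ k v (insert v I) (insert v J) = 0 := by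
          apply hgood _ hmem
          · simp [aIJ]
          · simp [aIJ, hjI, hjJ]
        have hIJ := eq_of_aIJ_zero k (Finset.mem_insert_self v I)
          (Finset.mem_insert_self v J) hzero
        rw [hIJ]
      rcases Finset.mem_union.mp hp with h1 | h1 <;> rcases Finset.mem_union.mp hq with h2 | h2
      · exact main v₁ j₁ hj₁v hgood₁ p q h1 h2 heq
      · exfalso
        obtain ⟨I, _, rfl⟩ := (mem_Tfam k).mp h1
        obtain ⟨J, _, rfl⟩ := (mem_Tfam k).mp h2
        exact hv12 (cross_sep k P hk hsurj v₁ v₂ _ _ heq)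
      · exfalso
        obtain ⟨I, _, rfl⟩ := (mem_Tfam k).mp h1
        obtain ⟨J, _, rfl⟩ := (mem_Tfam k).mp h2
        exact hv12 (cross_sep k P hk hsurj v₂ v₁ _ _ heq).symm
      · exact main v₂ j₂ hj₂v hgood₂ p q h1 h2 heq
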